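/- The quantity S_Q(ε) = (4/√2)(ε−1)ε² − (2/√2)ε⁴ + 2ε² is strictly negative for all ε with 0 < ε < 1 − √(√2 − 1), and S_Q(ε) = 0 at ε = 1 − √(√2 − 1). -/

import Mathlib

/-- The quantum value S_Q(ε) of the interventional Fritz expression. -/
noncomputable def SQ (ε : ℝ) : ℝ :=
  (4 / Real.sqrt 2) * (ε - 1) * ε ^ 2 - (2 / Real.sqrt 2) * ε ^ 4 + 2 * ε ^ 2

lemma SQ_factored (ε : ℝ) :
    SQ ε = (2 / Real.sqrt 2) * ε ^ 2 * ((Real.sqrt 2 - 1) - (ε - 1) ^ 2) := by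
  have hs : Real.sqrt 2 * Real.sqrt 2 = 2 := Real.mul_self_sqrt (by norm_num)
  have hne : Real.sqrt 2 ≠ 0 := by positivity
  unfold SQ
  have h2 : Real.sqrt 2 ^ 2 = 2 := by rw [sq]; exact hs
  have h3 : Real.sqrt 2 ^ 3 = 2 * Real.sqrt 2 := by rw [pow_succ, h2]
  field_simp
  ring_nf

/-- S_Q is strictly negative on (0, 1 − √(√2 − 1)) and vanishes at the endpoint. -/
theorem SQ_neg_iff :
    (∀ ε : ℝ, 0 < ε → ε < 1 - Real.sqrt (Real.sqrt 2 - 1) → SQ ε < 0) ∧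
      SQ (1 - Real.sqrt (Real.sqrt 2 - 1)) = 0 := by
  have h2 : (1:ℝ) ≤ Real.sqrt 2 := by
    rw [show (1:ℝ) = Real.sqrt 1 by simp]
    exact Real.sqrt_le_sqrt (by norm_num)
  have hsq : Real.sqrt (Real.sqrt 2 - 1) ^ 2 = Real.sqrt 2 - 1 :=
    Real.sq_sqrt (by linarith)
  have hnn : 0 ≤ Real.sqrt (Real.sqrt 2 - 1) := Real.sqrt_nonneg _
  have hcoef : 0 < 2 / Real.sqrt 2 := by positivity
  constructor
  · intro ε hε hε'
    rw [SQ_factored]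
    have h1 : Real.sqrt (Real.sqrt 2 - 1) < 1 - ε := by linarith
    have h2' : Real.sqrt 2 - 1 < (1 - ε) ^ 2 := by nlinarith
    have hfac : (Real.sqrt 2 - 1) - (ε - 1) ^ 2 < 0 := by nlinarith
    have hpos : 0 < (2 / Real.sqrt 2) * ε ^ 2 := by positivity
    nlinarith
  · rw [SQ_factored]
    have : (1 - Real.sqrt (Real.sqrt 2 - 1) - 1) ^ 2 = Real.sqrt 2 - 1 := by
      rw [show 1 - Real.sqrt (Real.sqrt 2 - 1) - 1 = -Real.sqrt (Real.sqrt 2 - 1) by ring,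
        neg_sq]
      exact hsq
    rw [this]
    ring
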